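/- Let S₁ and S₂ be commutative semirings (possibly without unit) and let I be an ideal of S₁ × S₂. If I is directly decomposable (I = I₁ × I₂ for some ideals I₁ of S₁ and I₂ of S₂), then ((S₁ × {0}) + I) ∩ (({0} × S₂) + I) = I, where for a subset X and ideal I of S₁ × S₂, X + I denotes {x + i | x ∈ X, i ∈ I}. -/
import Mathlib


open Pointwise

/-- An ideal of a (possibly non-unital) commutative semiring. -/
def IsSemiringIdeal {S : Type*} [NonUnitalCommSemiring S] (I : Set S) : Prop :=
  (0 : S) ∈ I ∧ (∀ a b : S, a ∈ I → b ∈ I → a + b ∈ I) ∧ (∀ a s : S, a ∈ I → a * s ∈ I)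

theorem stmt_1 {S₁ S₂ : Type*} [NonUnitalCommSemiring S₁] [NonUnitalCommSemiring S₂]
    (I : Set (S₁ × S₂)) (hI : IsSemiringIdeal I)
    (hdec : ∃ I₁ : Set S₁, ∃ I₂ : Set S₂,
        IsSemiringIdeal I₁ ∧ IsSemiringIdeal I₂ ∧ I = I₁ ×ˢ I₂) :
    (((Set.univ : Set S₁) ×ˢ ({0} : Set S₂)) + I) ∩
      ((({0} : Set S₁) ×ˢ (Set.univ : Set S₂)) + I) = I := by
  obtain ⟨I₁, I₂, h₁, h₂, rfl⟩ := hdec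
  ext ⟨x, y⟩
  constructor
  · rintro ⟨⟨⟨s, z⟩, ⟨-, hz⟩, ⟨i₁, i₂⟩, ⟨hi₁, hi₂⟩, h⟩,
      ⟨⟨w, t⟩, ⟨hw, -⟩, ⟨j₁, j₂⟩, ⟨hj₁, hj₂⟩, h'⟩⟩
    simp only [Set.mem_singleton_iff] at hz hw
    subst hz hw
    obtain ⟨hx, hy⟩ := Prod.mk.injEq .. ▸ h
    obtain ⟨hx', hy'⟩ := Prod.mk.injEq .. ▸ h'
    refine ⟨?_, ?_⟩
    · simp only [← hx', zero_add]; exact hj₁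
    · simp only [← hy, zero_add]; exact hi₂
  · rintro ⟨hx, hy⟩
    exact ⟨⟨(0, 0), ⟨Set.mem_univ _, rfl⟩, (x, y), ⟨hx, hy⟩, by simp⟩,
      ⟨(0, 0), ⟨rfl, Set.mem_univ _⟩, (x, y), ⟨hx, hy⟩, by simp⟩⟩
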